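/- Let M be a transitive relational Fraïssé structure. Then M is age-indivisible if and only if Age(M) has the vertex-Ramsey property. -/
import Mathlib


open FirstOrder FirstOrder.Language Set CategoryTheory

universe u v w x

section Defs

variable (L : FirstOrder.Language.{u, v}) (M : Type w) [L.Structure M]

/-- `X ⊆ M` contains a copy of `M`: there is a substructure of `M` with domain
contained in `X` that is isomorphic to `M`. -/
def ContainsCopy (X : Set M) : Prop :=
  ∃ S : L.Substructure M, (S : Set M) ⊆ X ∧ Nonempty (S ≃[L] M)

/-- The induced substructure on `C` is isomorphic to `M`. -/
def IsCopy (C : Set M) : Prop :=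
  ∃ S : L.Substructure M, (S : Set M) = C ∧ Nonempty (S ≃[L] M)

/-- The galah property: for every partition `(C, Cᶜ)` of the domain of `M`, either the
induced substructure on `C` is isomorphic to `M`, or `Cᶜ` contains a copy of `M`. -/
def GalahProperty : Prop := ∀ C : Set M, IsCopy L M C ∨ ContainsCopy L M Cᶜ

/-- Indivisibility: for every partition `(C, Cᶜ)` of the domain of `M`, one of the two
parts contains a copy of `M`. -/
def Indivisible : Prop := ∀ C : Set M, ContainsCopy L M C ∨ ContainsCopy L M Cᶜ

/-- `v` and `b` realize the same quantifier-free type over the parameter set `A`. -/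
def SameQfTypeOver (A : Set M) (v b : M) : Prop :=
  ∀ (n : ℕ) (φ : L.Formula (Fin (n + 1))), φ.IsQF →
    ∀ g : Fin n → M, (∀ i, g i ∈ A) →
      (φ.Realize (Fin.cons v g) ↔ φ.Realize (Fin.cons b g))

/-- Local replicability: every basic open set
`{v : M | qftp(v / A) = qftp(b / A)}`, for `A` a finite substructure of `M` and
`b ∈ M \\ A`, contains a copy of `M`. -/
def LocallyReplicable : Prop :=
  ∀ A : L.Substructure M, (A : Set M).Finite → ∀ b : M, b ∉ (A : Set M) →
    ContainsCopy L M {v : M | SameQfTypeOver L M (A : Set M) v b}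

/-- The infinite `k`-sunflower property: every structure on `k`-sets isomorphic to `M`
contains an induced substructure isomorphic to `M` whose domain is a sunflower. -/
def InfiniteKSunflowerProperty (k : ℕ) : Prop :=
  ∀ (α : Type x) (X : Set (Finset α)), (∀ v ∈ X, v.card = k) →
    ∀ [L.Structure ↥X], Nonempty (M ≃[L] ↥X) →
      ∃ (f : M ↪[L] ↥X) (c : Set α),
        ∀ a b : M, a ≠ b →
          ((f a : Finset α) : Set α) ∩ ((f b : Finset α) : Set α) = c

/-- The infinite sunflower property: the infinite `k`-sunflower property for all `k ≥ 1`. -/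
def InfiniteSunflowerProperty : Prop :=
  ∀ k : ℕ, 1 ≤ k → InfiniteKSunflowerProperty.{u, v, w, x} L M k

/-- A class of structures has strong amalgamation if any two embeddings from a common
structure can be amalgamated so that the images of the two structures intersect exactly
in the image of the common structure. -/
def HasStrongAmalgamation (K : Set (Bundled.{w} L.Structure)) : Prop :=
  ∀ A B₀ B₁ : Bundled.{w} L.Structure, A ∈ K → B₀ ∈ K → B₁ ∈ K →
    ∀ (f₀ : A ↪[L] B₀) (f₁ : A ↪[L] B₁),
      ∃ C : Bundled.{w} L.Structure, C ∈ K ∧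
        ∃ (g₀ : B₀ ↪[L] C) (g₁ : B₁ ↪[L] C),
          g₀.comp f₀ = g₁.comp f₁ ∧
          Set.range g₀ ∩ Set.range g₁ = Set.range (g₀.comp f₀)

end Defs

/-- `Age(X) = Age(M)` for a subset `X` of `M`: every finite substructure of `M` embeds
into `M` with range inside `X`. -/
def AgeEqualOn (L : FirstOrder.Language.{u, v}) (M : Type w) [L.Structure M]
    (X : Set M) : Prop :=
  ∀ T : L.Substructure M, (T : Set M).Finite →
    ∃ f : T ↪[L] M, Set.range f ⊆ X

/-- A transitive relational Fraïssé structure is age-indivisible if and only if its age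
has the vertex-Ramsey property. -/
theorem statement18 (L : FirstOrder.Language.{u, v}) [L.IsRelational]
    (M : Type w) [L.Structure M] [Countable M]
    (hM : L.IsUltrahomogeneous M)
    (htrans : ∀ v w : M, ∃ g : M ≃[L] M, g v = w) :
    (∀ C : Set M, AgeEqualOn L M C ∨ AgeEqualOn L M Cᶜ) ↔
      (∀ B ∈ L.age M, ∃ C ∈ L.age M,
        ∀ χ : C → Fin 2, ∃ e : B ↪[L] C, ∀ a b : B, χ (e a) = χ (e b)) := by
  classical
  have fin2 : ∀ v : Fin 2, v ≠ 0 → v = 1 := by decide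
  -- every finite substructure gives a member of the age
  have mem_age : ∀ S : L.Substructure M, (S : Set M).Finite →
      (⟨↥S, inferInstance⟩ : Bundled L.Structure) ∈ L.age M := by
    intro S hS
    haveI : Finite ↥S := hS.to_subtype
    exact ⟨Structure.fg_iff_finite.mpr inferInstance, ⟨S.subtype⟩⟩
  constructor
  · -- indivisibility implies vertex-Ramsey
    intro hInd B hB
    haveI : Finite B := hB.1.finite
    by_contra hcon
    push_neg at hcon
    rcases isEmpty_or_nonempty M with hME | hMN
    · obtain ⟨j⟩ := hB.2
      obtain ⟨χ, hχ⟩ := hcon B hB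
      obtain ⟨a, b, -⟩ := hχ (Embedding.refl L B)
      exact (hME.false (j a)).elim
    obtain ⟨f, hf⟩ := exists_surjective_nat M
    set S : ℕ → L.Substructure M := fun n => Substructure.closure L (f '' Set.Iic n) with hS
    have hSco : ∀ n, (S n : Set M) = f '' Set.Iic n := by
      intro n
      simp [hS, Substructure.closure_eq_of_isRelational]
    have hSfin : ∀ n, ((S n : Set M)).Finite := by
      intro n
      rw [hSco]
      exact (Set.finite_Iic n).image f
    choose χn hχn using fun n => hcon _ (mem_age (S n) (hSfin n))
    set χ' : ℕ → M → Fin 2 := fun n x => if h : x ∈ S n then χn n ⟨x, h⟩ else 0 with hχ'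
    set U : Ultrafilter ℕ := Ultrafilter.of Filter.atTop with hU
    have hUat : ∀ s : Set ℕ, s ∈ Filter.atTop → s ∈ U := fun s hs =>
      Ultrafilter.of_le Filter.atTop hs
    set χf : M → Fin 2 := fun x => if {n | χ' n x = 0} ∈ U then 0 else 1 with hχf
    have hlim : ∀ x, {n | χ' n x = χf x} ∈ U := by
      intro x
      by_cases hx : {n | χ' n x = 0} ∈ U
      · have : χf x = 0 := by simp [hχf, hx]
        rw [this]; exact hx
      · have hc : {n | χ' n x = 0}ᶜ ∈ U := Ultrafilter.compl_mem_iff_notMem.mpr hx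
        have : χf x = 1 := by simp [hχf, hx]
        rw [this]
        filter_upwards [hc] with n hn
        exact fin2 _ hn
    have key : ∀ (X : Set M) (c : Fin 2), (∀ x ∈ X, χf x = c) → AgeEqualOn L M X → False := by
      intro X c hXc hX
      obtain ⟨j⟩ := hB.2
      have hTfin : ((Substructure.closure L (Set.range j) : L.Substructure M) : Set M).Finite := by
        rw [Substructure.closure_eq_of_isRelational]
        exact Set.finite_range j
      obtain ⟨g, hg⟩ := hX (Substructure.closure L (Set.range j)) hTfin
      have hmem : ∀ b : B, j b ∈ Substructure.closure L (Set.range j) := fun b =>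
        Substructure.subset_closure (Set.mem_range_self b)
      set h : B ↪[L] M := g.comp (FirstOrder.Language.Embedding.codRestrict _ j hmem) with hh
      have hhc : ∀ b, χf (h b) = c := by
        intro b
        apply hXc
        apply hg
        exact Set.mem_range_self _
      have hmemU : ∀ b : B, {n | h b ∈ S n ∧ χ' n (h b) = c} ∈ U := by
        intro b
        have h1 : {n | h b ∈ S n} ∈ U := by
          apply hUat
          obtain ⟨k, hk⟩ := hf (h b)
          refine Filter.mem_of_superset (Filter.Ici_mem_atTop k) ?_
          intro n hn
          have : h b ∈ (S n : Set M) := by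
            rw [hSco]
            exact ⟨k, hn, hk⟩
          exact this
        have h2 : {n | χ' n (h b) = c} ∈ U := by
          have := hlim (h b)
          rwa [hhc b] at this
        have := Filter.inter_mem h1 h2
        exact this
      have hIU : (⋂ b : B, {n | h b ∈ S n ∧ χ' n (h b) = c}) ∈ U :=
        Filter.iInter_mem.mpr hmemU
      obtain ⟨n, hn⟩ := Ultrafilter.nonempty_of_mem hIU
      simp only [Set.mem_iInter] at hn
      set e : B ↪[L] ↥(S n) := FirstOrder.Language.Embedding.codRestrict _ h (fun b => (hn b).1) with he
      obtain ⟨a, b', hab⟩ := hχn n e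
      apply hab
      have hconst : ∀ b : B, χn n (e b) = c := by
        intro b
        have h2 := (hn b).2
        have : χ' n (h b) = χn n (e b) := by
          simp only [hχ', dif_pos (hn b).1]
          congr 1
        rw [this] at h2
        exact h2
      rw [hconst a, hconst b']
    rcases hInd (χf ⁻¹' {0}) with hX | hX
    · exact key _ 0 (fun x hx => hx) hX
    · exact key _ 1 (fun x hx => fin2 _ hx) hX
  · -- vertex-Ramsey implies indivisibility
    intro hR C
    by_contra hcon
    push_neg at hcon
    obtain ⟨h0, h1⟩ := hcon
    simp only [AgeEqualOn, not_forall] at h0 h1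
    obtain ⟨T0, hT0fin, hT0⟩ := h0
    obtain ⟨T1, hT1fin, hT1⟩ := h1
    push_neg at hT0 hT1
    set T : L.Substructure M := Substructure.closure L ((T0 : Set M) ∪ (T1 : Set M)) with hT
    have hTco : (T : Set M) = (T0 : Set M) ∪ (T1 : Set M) := by
      simp [hT, Substructure.closure_eq_of_isRelational]
    have hTfin : (T : Set M).Finite := by
      rw [hTco]; exact hT0fin.union hT1fin
    have hle0 : T0 ≤ T := by
      rw [← SetLike.coe_subset_coe, hTco]; exact Set.subset_union_left
    have hle1 : T1 ≤ T := by
      rw [← SetLike.coe_subset_coe, hTco]; exact Set.subset_union_right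
    obtain ⟨C', hC', hRam⟩ := hR _ (mem_age T hTfin)
    obtain ⟨j⟩ := hC'.2
    set χ : C' → Fin 2 := fun x => if j x ∈ C then 0 else 1 with hχ
    obtain ⟨e, he⟩ := hRam χ
    rcases isEmpty_or_nonempty ↥T with hTE | hTN
    · haveI : IsEmpty ↥T0 := ⟨fun x => hTE.false ⟨x.1, hle0 x.2⟩⟩
      refine hT0 T0.subtype ?_
      rintro x ⟨b, rfl⟩
      exact isEmptyElim b
    obtain ⟨t0⟩ := hTN
    have hcol : ∀ t : ↥T, χ (e t) = χ (e t0) := fun t => he t t0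
    rcases eq_or_ne (χ (e t0)) 0 with hc | hc
    · -- all of T lands in C, contradicting hT0
      refine hT0 ((j.comp e).comp (Substructure.inclusion hle0)) ?_
      rintro x ⟨b, rfl⟩
      have h0' : χ (e (Substructure.inclusion hle0 b)) = 0 := (hcol _).trans hc
      simp only [hχ] at h0'
      by_contra hxC
      simp only [Embedding.comp_apply] at hxC
      rw [if_neg hxC] at h0'
      exact one_ne_zero h0'
    · have hc1 : χ (e t0) = 1 := fin2 _ hc
      refine hT1 ((j.comp e).comp (Substructure.inclusion hle1)) ?_
      rintro x ⟨b, rfl⟩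
      have h0' : χ (e (Substructure.inclusion hle1 b)) = 1 := (hcol _).trans hc1
      simp only [hχ] at h0'
      intro hxC
      simp only [Embedding.comp_apply, Set.mem_compl_iff] at hxC
      rw [if_pos] at h0'
      · exact one_ne_zero h0'.symm
      · simpa using hxC
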